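/- Let a, b ∈ ℝ, τ > 0, b₁ := e^{−aτ} b, and let β ∈ C¹([−τ,0]). Then the delay differential equation ẋ(t) = a x(t) + b x(t − τ) for t ≥ 0 with initial condition x(t) = β(t) for t ∈ [−τ, 0] is uniquely solved by the function x ∈ C⁰([−τ,∞)) ∩ C¹([−τ,0]) ∩ C¹([0,∞)) given by x(t) = e^{a(t+τ)} exp_τ{b₁, t} β(−τ) + ∫_{−τ}^{0} e^{a(t−s)} exp_τ{b₁, t − τ − s} [β′(s) − a β(s)] ds. -/

import Mathlib

open Set Filter Topology Real intervalIntegral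

noncomputable section

/-- The delayed exponential function `exp_τ{b, t}`. -/
def delayedExp (b τ t : ℝ) : ℝ :=
  if t < -τ then 0
  else if t < 0 then 1
  else ∑ j ∈ Finset.range (⌊t / τ⌋.toNat + 2),
    b ^ j * (t - ((j : ℝ) - 1) * τ) ^ j / (Nat.factorial j)

/-- `y` solves `ẏ(t) = a y(t) + b y(t−τ)` for `t ≥ 0` with initial condition
`y = β` on `[−τ,0]`: continuous on `[−τ,∞)`, continuously differentiable on `[0,∞)`. -/
def IsDelaySolution (a b τ : ℝ) (β y : ℝ → ℝ) : Prop :=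
  ContinuousOn y (Set.Ici (-τ)) ∧
  (∀ t ∈ Set.Icc (-τ) (0:ℝ), y t = β t) ∧
  (∀ t ∈ Set.Ici (0:ℝ), HasDerivWithinAt y (a * y t + b * y (t - τ)) (Set.Ici 0) t)

/-- The explicit solution formula
`x(t) = e^{a(t+τ)} exp_τ{b₁,t} β(−τ) + ∫_{−τ}^0 e^{a(t−s)} exp_τ{b₁, t−τ−s} [β′(s) − aβ(s)] ds`
with `b₁ = e^{−aτ} b`. -/
def delaySolution (a b τ : ℝ) (β : ℝ → ℝ) (t : ℝ) : ℝ :=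
  Real.exp (a * (t + τ)) * delayedExp (Real.exp (-a * τ) * b) τ t * β (-τ) +
    ∫ s in (-τ)..(0:ℝ), Real.exp (a * (t - s)) * delayedExp (Real.exp (-a * τ) * b) τ (t - τ - s)
      * (derivWithin β (Set.Icc (-τ) 0) s - a * β s)

namespace DelayAux
open MeasureTheory

/-- partial sums defining the delayed exponential -/
def S (b τ : ℝ) (n : ℕ) (t : ℝ) : ℝ :=
  ∑ j ∈ Finset.range n, b ^ j * (t - ((j : ℝ) - 1) * τ) ^ j / (Nat.factorial j)

variable {b τ t : ℝ}

lemma dE_of_lt (h : t < -τ) : delayedExp b τ t = 0 := by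
  simp [delayedExp, h]

lemma dE_of_neg (h1 : -τ ≤ t) (h2 : t < 0) : delayedExp b τ t = 1 := by
  simp [delayedExp, not_lt.2 h1, h2]

lemma S_one : S b τ 1 t = 1 := by
  simp [S]

lemma S_succ (n : ℕ) : S b τ (n+1) t = S b τ n t + b ^ n * (t - ((n:ℝ)-1)*τ) ^ n / (Nat.factorial n) := by
  simp [S, Finset.sum_range_succ]

lemma dE_eq_S (hτ : 0 < τ) (ht : 0 ≤ t) :
    delayedExp b τ t = S b τ (⌊t / τ⌋.toNat + 2) t := by
  have h1 : ¬ t < -τ := not_lt.2 (le_trans (by linarith) ht)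
  have h2 : ¬ t < 0 := not_lt.2 ht
  simp [delayedExp, h1, h2, S]

lemma dE_zero (hτ : 0 < τ) : delayedExp b τ 0 = 1 := by
  rw [dE_eq_S hτ le_rfl]
  norm_num [S, Finset.sum_range_succ]

lemma dE_of_nonpos (hτ : 0 < τ) (h1 : -τ ≤ t) (h2 : t ≤ 0) : delayedExp b τ t = 1 := by
  rcases lt_or_eq_of_le h2 with h | h
  · exact dE_of_neg h1 h
  · rw [h]; exact dE_zero hτ

lemma dE_eq_S_on (hτ : 0 < τ) (k : ℕ) (ht : t ∈ Icc ((k:ℝ)*τ) ((k+1)*τ)) :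
    delayedExp b τ t = S b τ (k+2) t := by
  have ht0 : 0 ≤ t := le_trans (by positivity) ht.1
  rcases lt_or_eq_of_le ht.2 with h | h
  · have hfl : ⌊t / τ⌋ = (k : ℤ) := by
      rw [Int.floor_eq_iff]
      constructor
      · rw [le_div_iff₀ hτ]; exact_mod_cast ht.1
      · rw [div_lt_iff₀ hτ]; push_cast; exact_mod_cast h
    rw [dE_eq_S hτ ht0, hfl]
    norm_num
  · have hfl : ⌊t / τ⌋ = ((k : ℤ) + 1) := by
      rw [h, mul_div_assoc, div_self hτ.ne', mul_one]
      exact_mod_cast Int.floor_intCast ((k:ℤ)+1)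
    rw [dE_eq_S hτ ht0, hfl]
    have h4 : ((k:ℤ)+1).toNat + 2 = (k + 2) + 1 := by omega
    rw [h4, S_succ]
    have hz : t - ((((k+2):ℕ):ℝ) - 1) * τ = 0 := by push_cast; linarith [h]
    rw [hz]
    simp

lemma S_hasDerivAt (n : ℕ) (t : ℝ) :
    HasDerivAt (S b τ (n+1)) (b * S b τ n (t - τ)) t := by
  have : ∀ x, S b τ (n+1) x = ∑ j ∈ Finset.range (n+1),
      b ^ j * (x - ((j : ℝ) - 1) * τ) ^ j / (Nat.factorial j) := fun x => rfl
  have hd : HasDerivAt (S b τ (n+1))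
      (∑ j ∈ Finset.range (n+1),
        b ^ j * ((j:ℝ) * (t - ((j : ℝ) - 1) * τ) ^ (j-1)) / (Nat.factorial j)) t := by
    apply HasDerivAt.fun_sum
    intro j _
    have h1 : HasDerivAt (fun x : ℝ => (x - ((j : ℝ) - 1) * τ) ^ j)
        ((j:ℝ) * (t - ((j : ℝ) - 1) * τ) ^ (j-1)) t := by
      have := ((hasDerivAt_id t).sub_const (((j : ℝ) - 1) * τ)).pow j
      simp at this; exact this
    simpa [mul_div_assoc, mul_comm, mul_left_comm] using (h1.const_mul (b ^ j)).div_const (Nat.factorial j)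
  convert hd using 1
  rw [Finset.sum_range_succ']
  simp only [Nat.cast_zero, Nat.factorial_zero, pow_zero]
  rw [S, Finset.mul_sum]
  norm_num
  apply Finset.sum_congr rfl
  intro i _
  have hfac : ((Nat.factorial (i+1) : ℝ)) = ((i:ℝ)+1) * Nat.factorial i := by
    push_cast [Nat.factorial_succ]; ring
  have hne : ((i:ℝ)+1) ≠ 0 := by positivity
  have hfne : (Nat.factorial i : ℝ) ≠ 0 := by positivity
  field_simp [hfac]
  ring_nf
  rw [add_comm 1 i, Nat.factorial_succ]; push_cast; ring


lemma dE_eq_S_shift (hτ : 0 < τ) (k : ℕ) (ht : t ∈ Icc ((k:ℝ)*τ) ((k+1)*τ)) :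
    delayedExp b τ (t - τ) = S b τ (k+1) (t - τ) := by
  cases k with
  | zero =>
    rw [S_one, dE_of_nonpos hτ]
    · simp at ht; linarith [ht.1]
    · simp at ht; linarith [ht.2]
  | succ j =>
    have : t - τ ∈ Icc ((j:ℝ)*τ) ((j+1)*τ) := by
      constructor
      · have := ht.1; push_cast at this ⊢; linarith
      · have := ht.2; push_cast at this ⊢; linarith
    rw [dE_eq_S_on hτ j this]

lemma dE_hasDerivWithinAt_Icc (hτ : 0 < τ) (k : ℕ) (ht : t ∈ Icc ((k:ℝ)*τ) ((k+1)*τ)) :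
    HasDerivWithinAt (delayedExp b τ) (b * delayedExp b τ (t - τ))
      (Icc ((k:ℝ)*τ) ((k+1)*τ)) t := by
  have h1 : HasDerivAt (S b τ (k+2)) (b * S b τ (k+1) (t - τ)) t := S_hasDerivAt (k+1) t
  have h2 := h1.hasDerivWithinAt (s := Icc ((k:ℝ)*τ) ((k+1)*τ))
  rw [← dE_eq_S_shift hτ k ht] at h2
  exact h2.congr (fun y hy => dE_eq_S_on hτ k hy) (dE_eq_S_on hτ k ht)

lemma exists_mem_Icc (hτ : 0 < τ) (ht : 0 ≤ t) :
    ∃ k : ℕ, t ∈ Icc ((k:ℝ)*τ) ((k+1)*τ) := by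
  refine ⟨⌊t / τ⌋.toNat, ?_, ?_⟩
  · have h1 : ((⌊t / τ⌋.toNat : ℝ)) ≤ t / τ := by
      have h0 : (0:ℤ) ≤ ⌊t / τ⌋ := Int.floor_nonneg.2 (by positivity)
      have := Int.floor_le (t / τ)
      rw [show ((⌊t / τ⌋.toNat : ℝ)) = ((⌊t / τ⌋ : ℤ) : ℝ) by exact_mod_cast Int.toNat_of_nonneg h0]
      exact this
    calc ((⌊t / τ⌋.toNat : ℝ)) * τ ≤ (t / τ) * τ := by nlinarith
    _ = t := by field_simp
  · have h1 : t / τ < (⌊t / τ⌋.toNat : ℝ) + 1 := by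
      have h0 : (0:ℤ) ≤ ⌊t / τ⌋ := Int.floor_nonneg.2 (by positivity)
      have := Int.lt_floor_add_one (t / τ)
      rw [show ((⌊t / τ⌋.toNat : ℝ)) = ((⌊t / τ⌋ : ℤ) : ℝ) by exact_mod_cast Int.toNat_of_nonneg h0]
      exact this
    have : t / τ * τ < ((⌊t / τ⌋.toNat : ℝ) + 1) * τ := by nlinarith
    calc t = t / τ * τ := by field_simp
    _ ≤ ((⌊t / τ⌋.toNat : ℝ) + 1) * τ := le_of_lt this

lemma dE_hasDerivAt (hτ : 0 < τ) (h1 : -τ < t) (h2 : t ≠ 0) :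
    HasDerivAt (delayedExp b τ) (b * delayedExp b τ (t - τ)) t := by
  rcases lt_or_gt_of_ne h2 with hneg | hpos
  · -- locally constant 1 on (-τ, 0)
    have hE : delayedExp b τ (t - τ) = 0 := dE_of_lt (by linarith)
    rw [hE, mul_zero]
    have : ∀ᶠ y in 𝓝 t, delayedExp b τ y = 1 := by
      have : Ioo (-τ) 0 ∈ 𝓝 t := Ioo_mem_nhds h1 hneg
      filter_upwards [this] with y hy
      exact dE_of_neg (le_of_lt hy.1) hy.2
    have hc : HasDerivAt (fun _ : ℝ => (1:ℝ)) 0 t := hasDerivAt_const t 1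
    exact hc.congr_of_eventuallyEq this
  · obtain ⟨k, hk⟩ := exists_mem_Icc hτ (le_of_lt hpos)
    rcases lt_or_eq_of_le hk.1 with hlt | heq
    · -- interior or right part: use Icc k within, nbhd if t < (k+1)τ, else t = (k+1)τ endpoint
      rcases lt_or_eq_of_le hk.2 with hlt2 | heq2
      · exact (dE_hasDerivWithinAt_Icc hτ k hk).hasDerivAt (Icc_mem_nhds hlt hlt2)
      · -- t = (k+1)τ : glue Icc k (left) and Icc (k+1) (right)
        have hL : HasDerivWithinAt (delayedExp b τ) (b * delayedExp b τ (t - τ)) (Iic t) t :=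
          (dE_hasDerivWithinAt_Icc hτ k hk).mono_of_mem_nhdsWithin
            (Icc_mem_nhdsLE_of_mem ⟨by linarith, hk.2⟩)
        have hmem : t ∈ Icc (((k+1:ℕ):ℝ)*τ) (((k+1:ℕ)+1)*τ) := by
          push_cast
          constructor
          · linarith [heq2]
          · nlinarith [heq2, hτ]
        have hR : HasDerivWithinAt (delayedExp b τ) (b * delayedExp b τ (t - τ)) (Ici t) t :=
          (dE_hasDerivWithinAt_Icc hτ (k+1) hmem).mono_of_mem_nhdsWithin
            (Icc_mem_nhdsGE_of_mem ⟨hmem.1, by push_cast; push_cast at hmem; nlinarith [hmem.2, hτ]⟩)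
        have := hL.union hR
        rw [Iic_union_Ici] at this
        exact this.hasDerivAt (by simp)
    · -- t = kτ, k ≥ 1
      have hk1 : 1 ≤ k := by
        by_contra hc
        push_neg at hc
        interval_cases k
        simp at heq
        exact absurd heq.symm (ne_of_gt hpos)
      have hkm : t ∈ Icc (((k-1:ℕ):ℝ)*τ) (((k-1:ℕ)+1)*τ) := by
        have hcast : (((k-1:ℕ)):ℝ) = (k:ℝ) - 1 := by
          have : ((k:ℝ)) ≥ 1 := by exact_mod_cast hk1
          push_cast [Nat.cast_sub hk1]
          ring
        rw [hcast]
        constructor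
        · nlinarith [heq, hτ]
        · linarith [heq.symm.le, heq]
      have hL : HasDerivWithinAt (delayedExp b τ) (b * delayedExp b τ (t - τ)) (Iic t) t :=
        (dE_hasDerivWithinAt_Icc hτ (k-1) hkm).mono_of_mem_nhdsWithin
          (Icc_mem_nhdsLE_of_mem ⟨by
            have hcast : (((k-1:ℕ)):ℝ) = (k:ℝ) - 1 := by push_cast [Nat.cast_sub hk1]; ring
            rw [hcast]; nlinarith [heq, hτ], hkm.2⟩)
      have hR : HasDerivWithinAt (delayedExp b τ) (b * delayedExp b τ (t - τ)) (Ici t) t :=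
        (dE_hasDerivWithinAt_Icc hτ k hk).mono_of_mem_nhdsWithin
          (Icc_mem_nhdsGE_of_mem ⟨hk.1, by rw [← heq]; nlinarith [hτ]⟩)
      have := hL.union hR
      rw [Iic_union_Ici] at this
      exact this.hasDerivAt (by simp)

lemma dE_hasDerivWithinAt_Ici (hτ : 0 < τ) (ht : 0 ≤ t) :
    HasDerivWithinAt (delayedExp b τ) (b * delayedExp b τ (t - τ)) (Ici 0) t := by
  rcases lt_or_eq_of_le ht with hpos | heq
  · exact (dE_hasDerivAt hτ (by linarith) (ne_of_gt hpos)).hasDerivWithinAt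
  · subst heq
    have hmem : (0:ℝ) ∈ Icc (((0:ℕ):ℝ)*τ) (((0:ℕ)+1)*τ) := by
      constructor <;> simp <;> linarith
    exact (dE_hasDerivWithinAt_Icc hτ 0 hmem).mono_of_mem_nhdsWithin
      (Icc_mem_nhdsGE_of_mem ⟨hmem.1, by push_cast; linarith⟩)


lemma dE_continuousOn (hτ : 0 < τ) : ContinuousOn (delayedExp b τ) (Ici (-τ)) := by
  intro t ht
  rcases lt_or_ge t 0 with hneg | hpos
  · -- constant 1 near t within Ici (-τ)
    have hev : ∀ᶠ y in 𝓝[Ici (-τ)] t, delayedExp b τ y = 1 := by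
      have hIio : Iio (0:ℝ) ∈ 𝓝[Ici (-τ)] t := nhdsWithin_le_nhds (Iio_mem_nhds hneg)
      filter_upwards [hIio, self_mem_nhdsWithin] with y hy1 hy2
      exact dE_of_neg hy2 hy1
    exact (continuousWithinAt_const (b := (1:ℝ))).congr_of_eventuallyEq hev
      (dE_of_neg ht hneg)
  · -- t ≥ 0 : glue
    have hR : ContinuousWithinAt (delayedExp b τ) (Ici 0) t :=
      (dE_hasDerivWithinAt_Ici hτ hpos).continuousWithinAt
    have hL : ContinuousWithinAt (delayedExp b τ) (Icc (-τ) 0) t := by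
      rcases lt_or_eq_of_le hpos with h | h
      · apply continuousWithinAt_of_notMem_closure
        rw [IsClosed.closure_eq isClosed_Icc]
        intro hc
        exact absurd hc.2 (not_le.2 h)
      · subst h
        have : ∀ y ∈ Icc (-τ) (0:ℝ), delayedExp b τ y = 1 := fun y hy => dE_of_nonpos hτ hy.1 hy.2
        exact (continuousWithinAt_const (b := (1:ℝ))).congr this (dE_zero hτ)
    have := hL.union hR
    apply this.mono
    intro y hy
    rcases le_or_gt y 0 with h | h
    · exact Or.inl ⟨hy, h⟩
    · exact Or.inr (le_of_lt h)

lemma dE_slope_bound (hτ : 0 < τ) (M : ℝ) :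
    ∃ L, 0 ≤ L ∧ ∀ u v, u ∈ Icc (-τ) M → v ∈ Icc (-τ) M →
      |delayedExp b τ u - delayedExp b τ v| ≤ L * |u - v| := by
  rcases le_or_gt M 0 with hM | hM
  · -- everything in Icc (-τ) M has E = ... careful M could be negative ≥ -τ or below; E const 1 on [-τ,0]
    refine ⟨0, le_rfl, fun u v hu hv => ?_⟩
    rw [dE_of_nonpos hτ hu.1 (le_trans hu.2 hM), dE_of_nonpos hτ hv.1 (le_trans hv.2 hM)]
    simp
  · -- bound derivative on Icc 0 M
    have hcont : ContinuousOn (fun t => b * delayedExp b τ (t - τ)) (Icc 0 M) := by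
      apply ContinuousOn.mul continuousOn_const
      apply (dE_continuousOn hτ).comp (by fun_prop)
      intro x hx
      simp only [mem_Ici]
      linarith [hx.1]
    obtain ⟨C, hC⟩ := (isCompact_Icc (a := (0:ℝ)) (b := M)).exists_bound_of_continuousOn hcont
    have hC0 : 0 ≤ C := le_trans (norm_nonneg _) (hC 0 ⟨le_rfl, le_of_lt hM⟩)
    refine ⟨C, hC0, fun u v hu hv => ?_⟩
    have key : ∀ w ∈ Icc (-τ) M, delayedExp b τ w = delayedExp b τ (max w 0) := by
      intro w hw
      rcases le_or_gt 0 w with h | h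
      · rw [max_eq_left h]
      · rw [max_eq_right (le_of_lt h), dE_of_neg hw.1 h, dE_zero hτ]
    rw [key u hu, key v hv]
    have hmem : ∀ w ∈ Icc (-τ) M, max w 0 ∈ Icc (0:ℝ) M := fun w hw =>
      ⟨le_max_right _ _, max_le hw.2 (le_of_lt hM)⟩
    have hlip := Convex.norm_image_sub_le_of_norm_hasDerivWithin_le
      (f := delayedExp b τ) (f' := fun t => b * delayedExp b τ (t - τ)) (s := Icc (0:ℝ) M)
      (fun x hx => (dE_hasDerivWithinAt_Ici hτ hx.1).mono Icc_subset_Ici_self)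
      (fun x hx => hC x hx) (convex_Icc 0 M) (hmem v hv) (hmem u hu)
    calc |delayedExp b τ (max u 0) - delayedExp b τ (max v 0)| ≤ C * |max u 0 - max v 0| := hlip
    _ ≤ C * |u - v| := by
        apply mul_le_mul_of_nonneg_left _ hC0
        exact abs_max_sub_max_le_abs u v 0


lemma J_hasDerivWithinAt (hτ : 0 < τ) {ψ : ℝ → ℝ} (hψ : ContinuousOn ψ (Icc (-τ) 0))
    {t₀ : ℝ} (ht₀ : 0 ≤ t₀) :
    HasDerivWithinAt (fun t => ∫ s in (-τ)..(0:ℝ), delayedExp b τ (t - τ - s) * ψ s)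
      (b * ∫ s in (-τ)..(0:ℝ), delayedExp b τ (t₀ - τ - τ - s) * ψ s) (Ici 0) t₀ := by
  have hτ0 : -τ ≤ (0:ℝ) := by linarith
  have huIcc : uIcc (-τ) (0:ℝ) = Icc (-τ) 0 := uIcc_of_le hτ0
  have hΙ : uIoc (-τ) (0:ℝ) = Ioc (-τ) 0 := uIoc_of_le hτ0
  have hcontE : ∀ y, 0 ≤ y →
      ContinuousOn (fun s => delayedExp b τ (y - τ - s) * ψ s) (Icc (-τ) 0) := by
    intro y hy
    apply ContinuousOn.mul _ hψ
    apply (dE_continuousOn hτ).comp (Continuous.continuousOn (by fun_prop))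
    intro s hs
    simp only [mem_Ici]
    linarith [hs.2]
  have hInt : ∀ y, 0 ≤ y →
      IntervalIntegrable (fun s => delayedExp b τ (y - τ - s) * ψ s) MeasureTheory.volume (-τ) 0 := by
    intro y hy
    apply ContinuousOn.intervalIntegrable
    rw [huIcc]
    exact hcontE y hy
  obtain ⟨L, hL0, hL⟩ := dE_slope_bound (b := b) hτ (t₀ + 1)
  rw [hasDerivWithinAt_iff_tendsto_slope]
  set l := 𝓝[Ici 0 \ {t₀}] t₀ with hl
  set Φ : ℝ → ℝ := fun t => ∫ s in (-τ)..(0:ℝ), delayedExp b τ (t - τ - s) * ψ s with hΦ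
  set F : ℝ → ℝ → ℝ := fun y s =>
    (delayedExp b τ (y - τ - s) - delayedExp b τ (t₀ - τ - s)) * ψ s / (y - t₀) with hF
  set f : ℝ → ℝ := fun s => b * (delayedExp b τ (t₀ - τ - τ - s) * ψ s) with hf
  have hmain : Tendsto (fun y => ∫ s in (-τ)..(0:ℝ), F y s) l (𝓝 (∫ s in (-τ)..(0:ℝ), f s)) := by
    apply intervalIntegral.tendsto_integral_filter_of_dominated_convergence
      (bound := fun s => L * |ψ s|)
    · filter_upwards [self_mem_nhdsWithin] with y hy
      apply ContinuousOn.aestronglyMeasurable _ measurableSet_uIoc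
      have : ContinuousOn (F y) (Icc (-τ) 0) := by
        apply ContinuousOn.div_const
        apply ContinuousOn.mul _ hψ
        apply ContinuousOn.sub
        · apply (dE_continuousOn hτ).comp (Continuous.continuousOn (by fun_prop))
          intro s hs
          simp only [mem_Ici]
          have := mem_Ici.1 hy.1
          linarith [hs.2]
        · apply (dE_continuousOn hτ).comp (Continuous.continuousOn (by fun_prop))
          intro s hs
          simp only [mem_Ici]
          linarith [hs.2]
      exact this.mono (by rw [hΙ]; exact Ioc_subset_Icc_self)
    · have h1 : ∀ᶠ y in l, |y - t₀| < 1 := by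
        apply Filter.Eventually.filter_mono nhdsWithin_le_nhds
        have := Metric.ball_mem_nhds t₀ one_pos
        filter_upwards [this] with y hy
        simpa [Real.dist_eq] using hy
      filter_upwards [self_mem_nhdsWithin, h1] with y hy hy1
      apply MeasureTheory.ae_of_all
      intro s hs
      rw [hΙ] at hs
      have hyne : y - t₀ ≠ 0 := sub_ne_zero.2 hy.2
      have hu : y - τ - s ∈ Icc (-τ) (t₀ + 1) := by
        constructor
        · have : s ≤ y := le_trans hs.2 hy.1
          linarith
        · have : -s ≤ τ := by linarith [hs.1]
          have hyb : y < t₀ + 1 := by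
            have := abs_lt.1 hy1
            linarith [this.1, this.2]
          linarith
      have hv : t₀ - τ - s ∈ Icc (-τ) (t₀ + 1) := by
        constructor
        · have : s ≤ t₀ := le_trans hs.2 ht₀
          linarith
        · have : -s ≤ τ := by linarith [hs.1]
          linarith
      have hkey := hL _ _ hu hv
      have hdiff : (y - τ - s) - (t₀ - τ - s) = y - t₀ := by ring
      rw [hdiff] at hkey
      have habs : |F y s| = |delayedExp b τ (y - τ - s) - delayedExp b τ (t₀ - τ - s)| * |ψ s| / |y - t₀| := by
        rw [hF]
        rw [abs_div, abs_mul]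
      rw [Real.norm_eq_abs, habs]
      rw [div_le_iff₀ (abs_pos.2 hyne)]
      calc |delayedExp b τ (y - τ - s) - delayedExp b τ (t₀ - τ - s)| * |ψ s|
          ≤ (L * |y - t₀|) * |ψ s| := by
            apply mul_le_mul_of_nonneg_right hkey (abs_nonneg _)
        _ = L * |ψ s| * |y - t₀| := by ring
    · apply ContinuousOn.intervalIntegrable
      rw [huIcc]
      exact continuousOn_const.mul hψ.abs
    · have hane : ∀ c : ℝ, ∀ᵐ (s : ℝ), s ≠ c := by
        intro c
        rw [Filter.eventually_iff, MeasureTheory.mem_ae_iff]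
        have : {s : ℝ | s ≠ c}ᶜ = {c} := by ext s; simp
        rw [this]
        exact Real.volume_singleton
      filter_upwards [hane (t₀ - τ), hane t₀] with s hs1 hs2 hsΙ
      rw [hΙ] at hsΙ
      have hr1 : -τ < t₀ - τ - s := by
        have hst : s < t₀ := by
          rcases lt_or_eq_of_le (le_trans hsΙ.2 ht₀) with h | h
          · exact h
          · exact absurd h hs2
        linarith
      have hr2 : t₀ - τ - s ≠ 0 := by
        intro hc
        apply hs1
        linarith [hc]
      have hd := dE_hasDerivAt (b := b) hτ hr1 hr2
      have hin : HasDerivAt (fun y : ℝ => y - τ - s) 1 t₀ := by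
        simpa using ((hasDerivAt_id t₀).sub_const τ).sub_const s
      have hshift : HasDerivAt (fun y => delayedExp b τ (y - τ - s))
          (b * delayedExp b τ (t₀ - τ - s - τ)) t₀ := by
        have := HasDerivAt.comp t₀ hd hin
        exact this.congr_deriv (mul_one _)
      have hmul : HasDerivAt (fun y => delayedExp b τ (y - τ - s) * ψ s)
          (b * delayedExp b τ (t₀ - τ - s - τ) * ψ s) t₀ := hshift.mul_const (ψ s)
      have hslope := hasDerivAt_iff_tendsto_slope.1 hmul
      have hmono : l ≤ 𝓝[{t₀}ᶜ] t₀ := nhdsWithin_mono t₀ (fun y hy => hy.2)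
      have htend := hslope.mono_left hmono
      have heq : ∀ y, slope (fun y => delayedExp b τ (y - τ - s) * ψ s) t₀ y = F y s := by
        intro y
        rw [slope_def_field, hF]
        ring
      have : f s = b * delayedExp b τ (t₀ - τ - s - τ) * ψ s := by
        simp only [hf]
        rw [show t₀ - τ - τ - s = t₀ - τ - s - τ by ring]
        ring
      rw [this]
      exact Tendsto.congr heq htend
  -- now identify slope Φ t₀ with fun y => ∫ F y, and the limit values
  have hfinal : (∫ s in (-τ)..(0:ℝ), f s)
      = b * ∫ s in (-τ)..(0:ℝ), delayedExp b τ (t₀ - τ - τ - s) * ψ s := by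
    rw [hf]
    exact intervalIntegral.integral_const_mul b _
  rw [← hfinal]
  apply Tendsto.congr' _ hmain
  filter_upwards [self_mem_nhdsWithin] with y hy
  have hyne : y - t₀ ≠ 0 := sub_ne_zero.2 hy.2
  have hy0 : (0:ℝ) ≤ y := mem_Ici.1 hy.1
  have hFeq : ∀ s, F y s = (delayedExp b τ (y - τ - s) * ψ s
      - delayedExp b τ (t₀ - τ - s) * ψ s) * (y - t₀)⁻¹ := by
    intro s
    rw [hF]
    ring
  rw [intervalIntegral.integral_congr (fun s _ => hFeq s)]
  rw [intervalIntegral.integral_mul_const, intervalIntegral.integral_sub (hInt y hy0) (hInt t₀ ht₀)]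
  rw [slope_def_field]
  rw [div_eq_mul_inv]


section Sol

variable {a b τ : ℝ} {β : ℝ → ℝ}

/-- `b₁ = e^{-aτ} b` -/
def b1 (a b τ : ℝ) : ℝ := Real.exp (-a*τ) * b

def psiF (a τ : ℝ) (β : ℝ → ℝ) (s : ℝ) : ℝ :=
  Real.exp (-(a*s)) * (derivWithin β (Icc (-τ) 0) s - a * β s)

def phiF (a : ℝ) (β : ℝ → ℝ) (s : ℝ) : ℝ := Real.exp (-(a*s)) * β s

def Jf (a b τ : ℝ) (β : ℝ → ℝ) (t : ℝ) : ℝ :=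
  ∫ s in (-τ)..(0:ℝ), delayedExp (b1 a b τ) τ (t - τ - s) * psiF a τ β s

def uf (a b τ : ℝ) (β : ℝ → ℝ) (t : ℝ) : ℝ :=
  Real.exp (a*τ) * β (-τ) * delayedExp (b1 a b τ) τ t + Jf a b τ β t

lemma psi_contOn (hτ : 0 < τ) (hβ : ContDiffOn ℝ 1 β (Icc (-τ) 0)) :
    ContinuousOn (psiF a τ β) (Icc (-τ) 0) := by
  apply ContinuousOn.mul (Continuous.continuousOn (by fun_prop))
  exact (hβ.continuousOn_derivWithin (uniqueDiffOn_Icc (by linarith)) le_rfl).sub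
    (continuousOn_const.mul hβ.continuousOn)

lemma phi_hasDeriv (hβ : ContDiffOn ℝ 1 β (Icc (-τ) 0)) {s : ℝ} (hs : s ∈ Icc (-τ) 0) :
    HasDerivWithinAt (phiF a β) (psiF a τ β s) (Icc (-τ) 0) s := by
  have hb : HasDerivWithinAt β (derivWithin β (Icc (-τ) 0) s) (Icc (-τ) 0) s :=
    ((hβ.differentiableOn one_ne_zero) s hs).hasDerivWithinAt
  have he : HasDerivAt (fun s : ℝ => Real.exp (-(a*s))) (-a * Real.exp (-(a*s))) s := by
    have h1 : HasDerivAt (fun s : ℝ => -(a*s)) (-a) s := by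
      exact ((hasDerivAt_id s).const_mul a).neg.congr_deriv (by ring)
    refine ((Real.hasDerivAt_exp (-(a*s))).comp s h1).congr_deriv ?_; ring
  have := he.hasDerivWithinAt.mul hb
  refine this.congr_deriv (Eq.symm ?_)
  simp only [psiF, phiF]
  ring

lemma phi_contOn (hβ : ContDiffOn ℝ 1 β (Icc (-τ) 0)) :
    ContinuousOn (phiF a β) (Icc (-τ) 0) :=
  (Continuous.continuousOn (by fun_prop)).mul hβ.continuousOn

lemma u_eq_phi (hτ : 0 < τ) (hβ : ContDiffOn ℝ 1 β (Icc (-τ) 0)) {r : ℝ}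
    (hr : r ∈ Icc (-τ) 0) : uf a b τ β r = phiF a β r := by
  have hψc := psi_contOn (a := a) hτ hβ
  have hE1 : delayedExp (b1 a b τ) τ r = 1 := dE_of_nonpos hτ hr.1 hr.2
  set g : ℝ → ℝ := fun s => delayedExp (b1 a b τ) τ (r - τ - s) * psiF a τ β s with hg
  have hgψ : EqOn g (psiF a τ β) (Icc (-τ) r) := by
    intro s hs
    have h1 : -τ ≤ r - τ - s := by linarith [hs.2]
    have h2 : r - τ - s ≤ 0 := by linarith [hs.1, hr.2]
    simp only [hg]
    rw [dE_of_nonpos hτ h1 h2, one_mul]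
  have hg0 : ∀ s ∈ Ioc r (0:ℝ), g s = 0 := by
    intro s hs
    simp only [hg]
    rw [dE_of_lt (by linarith [hs.1]), zero_mul]
  have huIr : uIcc (-τ) r = Icc (-τ) r := uIcc_of_le hr.1
  have hint1 : IntervalIntegrable g MeasureTheory.volume (-τ) r := by
    apply ContinuousOn.intervalIntegrable
    rw [huIr]
    exact ((hψc.mono (Icc_subset_Icc le_rfl hr.2)).congr hgψ)
  have hint2 : IntervalIntegrable g MeasureTheory.volume r 0 := by
    apply IntervalIntegrable.congr_ae (_root_.intervalIntegrable_const (c := (0:ℝ)))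
    apply MeasureTheory.ae_restrict_of_forall_mem measurableSet_uIoc
    intro s hs
    rw [uIoc_of_le hr.2] at hs
    exact (hg0 s hs).symm
  have hsplit : Jf a b τ β r = (∫ s in (-τ)..r, g s) + ∫ s in r..(0:ℝ), g s := by
    rw [Jf]
    exact (intervalIntegral.integral_add_adjacent_intervals hint1 hint2).symm
  have hI1 : (∫ s in (-τ)..r, g s) = ∫ s in (-τ)..r, psiF a τ β s := by
    apply intervalIntegral.integral_congr
    rw [huIr]
    exact hgψ
  have hI2 : (∫ s in r..(0:ℝ), g s) = 0 := by
    have h0 : (∫ s in r..(0:ℝ), g s) = ∫ s in r..(0:ℝ), (0:ℝ) := by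
      apply intervalIntegral.integral_congr_ae
      apply MeasureTheory.ae_of_all
      intro s hs
      rw [uIoc_of_le hr.2] at hs
      exact hg0 s hs
    rw [h0]
    simp
  have hFTC : (∫ s in (-τ)..r, psiF a τ β s) = phiF a β r - phiF a β (-τ) := by
    apply intervalIntegral.integral_eq_sub_of_hasDeriv_right_of_le hr.1
    · exact (phi_contOn hβ).mono (Icc_subset_Icc le_rfl hr.2)
    · intro x hx
      have hxm : x ∈ Icc (-τ) (0:ℝ) := ⟨le_of_lt hx.1, le_of_lt (lt_of_lt_of_le hx.2 hr.2)⟩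
      apply (phi_hasDeriv hβ hxm).mono_of_mem_nhdsWithin
      apply mem_of_superset (Ioc_mem_nhdsGT_of_mem ⟨le_rfl, lt_of_lt_of_le hx.2 hr.2⟩)
      exact Ioc_subset_Icc_self.trans (Icc_subset_Icc hxm.1 le_rfl)
    · apply ContinuousOn.intervalIntegrable
      rw [huIr]
      exact hψc.mono (Icc_subset_Icc le_rfl hr.2)
  have hphiτ : phiF a β (-τ) = Real.exp (a*τ) * β (-τ) := by
    simp only [phiF]
    norm_num
  rw [uf, hE1, mul_one, hsplit, hI1, hI2, add_zero, hFTC, hphiτ]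
  ring

lemma D_eq (t : ℝ) : delaySolution a b τ β t = Real.exp (a*t) * uf a b τ β t := by
  have hb1 : Real.exp (-a*τ) * b = b1 a b τ := rfl
  have hI : (∫ s in (-τ)..(0:ℝ), Real.exp (a*(t-s)) * delayedExp (b1 a b τ) τ (t - τ - s)
        * (derivWithin β (Icc (-τ) 0) s - a * β s))
      = Real.exp (a*t) * Jf a b τ β t := by
    rw [Jf, ← intervalIntegral.integral_const_mul]
    apply intervalIntegral.integral_congr
    intro s _
    have hexp : Real.exp (a*(t-s)) = Real.exp (a*t) * Real.exp (-(a*s)) := by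
      rw [← Real.exp_add]
      ring_nf
    simp only [psiF]
    rw [hexp]
    ring
  rw [delaySolution, hb1, hI, uf]
  have hexp2 : Real.exp (a*(t+τ)) = Real.exp (a*t) * Real.exp (a*τ) := by
    rw [← Real.exp_add]
    ring_nf
  rw [hexp2]
  ring

lemma u_hasDeriv (hτ : 0 < τ) (hβ : ContDiffOn ℝ 1 β (Icc (-τ) 0)) {t : ℝ} (ht : 0 ≤ t) :
    HasDerivWithinAt (uf a b τ β) (b1 a b τ * uf a b τ β (t - τ)) (Ici 0) t := by
  have h1 := (dE_hasDerivWithinAt_Ici (b := b1 a b τ) hτ ht).const_mul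
    (Real.exp (a*τ) * β (-τ))
  have h2 := J_hasDerivWithinAt (b := b1 a b τ) hτ (psi_contOn (a := a) hτ hβ) ht
  have h3 := h1.add h2
  have : uf a b τ β = fun t => Real.exp (a*τ) * β (-τ) * delayedExp (b1 a b τ) τ t
      + Jf a b τ β t := rfl
  rw [this]
  refine h3.congr_deriv (Eq.symm ?_)
  simp only [uf, Jf]
  ring

lemma D_hasDeriv (hτ : 0 < τ) (hβ : ContDiffOn ℝ 1 β (Icc (-τ) 0)) {t : ℝ} (ht : 0 ≤ t) :
    HasDerivWithinAt (delaySolution a b τ β)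
      (a * delaySolution a b τ β t + Real.exp (a*t) * (b1 a b τ * uf a b τ β (t - τ)))
      (Ici 0) t := by
  have hu := u_hasDeriv (a := a) (b := b) hτ hβ ht
  have he : HasDerivAt (fun t : ℝ => Real.exp (a*t)) (a * Real.exp (a*t)) t := by
    have h1 : HasDerivAt (fun t : ℝ => a*t) a t := by
      simpa using (hasDerivAt_id t).const_mul a
    exact ((Real.hasDerivAt_exp (a*t)).comp t h1).congr_deriv (mul_comm _ _)
  have h2 := he.hasDerivWithinAt.mul hu
  have hfun : delaySolution a b τ β = fun t => Real.exp (a*t) * uf a b τ β t :=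
    funext fun t => D_eq t
  rw [hfun]
  refine h2.congr_deriv (Eq.symm ?_)
  ring


lemma uniq (hτ : 0 < τ) {y z : ℝ → ℝ} (hy : IsDelaySolution a b τ β y)
    (hz : IsDelaySolution a b τ β z) : ∀ t ∈ Ici (0:ℝ), y t = z t := by
  obtain ⟨hyc, hyi, hyd⟩ := hy
  obtain ⟨hzc, hzi, hzd⟩ := hz
  have key : ∀ n : ℕ, ∀ t ∈ Icc (-τ) ((n:ℝ)*τ), y t = z t := by
    intro n
    induction n with
    | zero =>
      intro t ht
      have ht' : t ∈ Icc (-τ) (0:ℝ) := by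
        constructor
        · exact ht.1
        · simpa using ht.2
      rw [hyi t ht', hzi t ht']
    | succ n ih =>
      intro t ht
      rcases le_or_gt t ((n:ℝ)*τ) with h | h
      · exact ih t ⟨ht.1, h⟩
      · set c : ℝ := (n:ℝ)*τ with hc
        set d : ℝ := ((n:ℝ)+1)*τ with hd
        have hc0 : 0 ≤ c := by positivity
        have hcd : c < d := by
          simp only [hc, hd]
          nlinarith
        have htd : t ≤ d := by
          have := ht.2
          push_cast at this
          exact this
        set v : ℝ → ℝ := fun w => Real.exp (-(a*w)) * (y w - z w) with hv
        have hsub : Icc c d ⊆ Ici (-τ) := fun w hw => le_trans (by linarith) hw.1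
        have hcontv : ContinuousOn v (Icc c d) := by
          apply ContinuousOn.mul (Continuous.continuousOn (by fun_prop))
          exact (hyc.mono hsub).sub (hzc.mono hsub)
        have hderivv : ∀ x ∈ Ico c d, HasDerivWithinAt v 0 (Ici x) x := by
          intro x hx
          have hx0 : 0 ≤ x := le_trans hc0 hx.1
          have hy' := (hyd x (mem_Ici.2 hx0)).mono (Ici_subset_Ici.2 hx0)
          have hz' := (hzd x (mem_Ici.2 hx0)).mono (Ici_subset_Ici.2 hx0)
          have hw := hy'.sub hz'
          have he : HasDerivAt (fun w : ℝ => Real.exp (-(a*w))) (-a * Real.exp (-(a*x))) x := by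
            have h1 : HasDerivAt (fun w : ℝ => -(a*w)) (-a) x := by
              exact ((hasDerivAt_id x).const_mul a).neg.congr_deriv (by ring)
            refine ((Real.hasDerivAt_exp (-(a*x))).comp x h1).congr_deriv ?_; ring
          have h2 := he.hasDerivWithinAt.mul hw
          have hzero : y (x - τ) = z (x - τ) := by
            apply ih
            constructor
            · have := hx.1
              simp only [hc] at this
              linarith
            · have := hx.2
              simp only [hc, hd] at this ⊢
              linarith
          refine h2.congr_deriv (Eq.symm ?_)
          rw [hzero, Pi.sub_apply]
          ring
        have hvt : v t = v c :=
          constant_of_has_deriv_right_zero hcontv hderivv t ⟨le_of_lt h, htd⟩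
        have hvc : v c = 0 := by
          have : y c = z c := ih c ⟨by linarith, le_rfl⟩
          simp only [hv, this]
          ring
        have : Real.exp (-(a*t)) * (y t - z t) = 0 := by
          rw [← hvc]
          exact hvt
        have hexp : Real.exp (-(a*t)) ≠ 0 := Real.exp_ne_zero _
        have := mul_eq_zero.1 this
        rcases this with h' | h'
        · exact absurd h' hexp
        · linarith [sub_eq_zero.1 h']
  intro t ht
  obtain ⟨k, hk⟩ := exists_mem_Icc hτ (mem_Ici.1 ht)
  apply key (k+1)
  constructor
  · linarith [mem_Ici.1 ht, hτ]
  · push_cast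
    exact_mod_cast hk.2

end Sol

end DelayAux

open DelayAux in
/-- For `β ∈ C¹([−τ,0])`, the delay differential equation `ẋ(t) = a x(t) + b x(t−τ)`,
`t ≥ 0`, with `x = β` on `[−τ,0]`, is uniquely solved by the explicit formula above
(for `t ≥ 0`; on `[−τ,0]` the solution is `β`). -/
theorem delay_ode_general_initial_data_unique_solution
    (a b τ : ℝ) (hτ : 0 < τ) (β : ℝ → ℝ) (hβ : ContDiffOn ℝ 1 β (Set.Icc (-τ) 0)) :
    (IsDelaySolution a b τ β
      (fun t => if t ≤ 0 then β t else delaySolution a b τ β t)) ∧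
    (∀ t ∈ Set.Ici (0:ℝ),
      (fun t => if t ≤ 0 then β t else delaySolution a b τ β t) t = delaySolution a b τ β t) ∧
    ∀ y : ℝ → ℝ, IsDelaySolution a b τ β y →
      ∀ t ∈ Set.Ici (0:ℝ), y t = delaySolution a b τ β t := by
  classical
  set xF : ℝ → ℝ := fun t => if t ≤ 0 then β t else delaySolution a b τ β t with hxF
  have hD0 : delaySolution a b τ β 0 = β 0 := by
    rw [DelayAux.D_eq, DelayAux.u_eq_phi hτ hβ ⟨by linarith, le_rfl⟩]
    simp [DelayAux.phiF]
  have hxF_eq : ∀ t ∈ Ici (0:ℝ), xF t = delaySolution a b τ β t := by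
    intro t ht
    by_cases hle : t ≤ 0
    · have ht0 : t = 0 := le_antisymm hle (mem_Ici.1 ht)
      subst ht0
      simp only [hxF, if_pos le_rfl]
      exact hD0.symm
    · simp only [hxF, if_neg hle]
  have hderiv : ∀ t ∈ Ici (0:ℝ), HasDerivWithinAt xF (a * xF t + b * xF (t - τ)) (Ici 0) t := by
    intro t ht
    have ht0 : (0:ℝ) ≤ t := mem_Ici.1 ht
    have hx := DelayAux.D_hasDeriv (a := a) (b := b) hτ hβ ht0
    have hcongr := hx.congr (fun y hy => hxF_eq y hy) (hxF_eq t ht)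
    refine hcongr.congr_deriv (Eq.symm ?_)
    have h1 : a * xF t = a * delaySolution a b τ β t := by rw [hxF_eq t ht]
    rw [h1]
    congr 1
    by_cases hτt : t ≤ τ
    · have hmem : t - τ ∈ Icc (-τ) (0:ℝ) := ⟨by linarith, by linarith⟩
      have hxFv : xF (t - τ) = β (t - τ) := by simp only [hxF, if_pos hmem.2]
      rw [hxFv, DelayAux.u_eq_phi hτ hβ hmem]
      simp only [DelayAux.phiF, DelayAux.b1]
      rw [show Real.exp (a*t) * (Real.exp (-a*τ) * b * (Real.exp (-(a*(t-τ))) * β (t-τ)))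
          = Real.exp (a*t + (-a*τ + -(a*(t-τ)))) * (b * β (t-τ)) by
        rw [Real.exp_add, Real.exp_add]; ring]
      rw [show a*t + (-a*τ + -(a*(t-τ))) = 0 by ring, Real.exp_zero, one_mul]
    · push_neg at hτt
      have hxFv : xF (t - τ) = delaySolution a b τ β (t - τ) := by
        simp only [hxF, if_neg (not_le.2 (by linarith : (0:ℝ) < t - τ))]
      rw [hxFv, DelayAux.D_eq]
      simp only [DelayAux.b1]
      rw [show Real.exp (a*t) * (Real.exp (-a*τ) * b * DelayAux.uf a b τ β (t-τ))
          = Real.exp (a*t + -a*τ) * (b * DelayAux.uf a b τ β (t-τ)) by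
        rw [Real.exp_add]; ring]
      rw [show a*t + -a*τ = a*(t-τ) by ring]
      ring
  have hcont : ContinuousOn xF (Ici (-τ)) := by
    intro t ht
    rcases lt_or_ge t 0 with h | h
    · have hmem : Icc (-τ) (0:ℝ) ∈ 𝓝[Ici (-τ)] t := by
        rw [mem_nhdsWithin]
        exact ⟨Iio 0, isOpen_Iio, h, fun y hy => ⟨hy.2, le_of_lt hy.1⟩⟩
      apply ContinuousWithinAt.mono_of_mem_nhdsWithin _ hmem
      apply (hβ.continuousOn t ⟨mem_Ici.1 ht, h.le⟩).congr
      · intro y hy; simp only [hxF, if_pos hy.2]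
      · simp only [hxF, if_pos h.le]
    · have hR : ContinuousWithinAt xF (Ici 0) t := by
        have hx := DelayAux.D_hasDeriv (a := a) (b := b) hτ hβ h
        exact (hx.congr (fun y hy => hxF_eq y hy) (hxF_eq t h)).continuousWithinAt
      have hL : ContinuousWithinAt xF (Icc (-τ) 0) t := by
        rcases lt_or_eq_of_le h with hpos | heq
        · apply continuousWithinAt_of_notMem_closure
          rw [IsClosed.closure_eq isClosed_Icc]
          intro hcmem
          exact absurd hcmem.2 (not_le.2 hpos)
        · subst heq
          apply (hβ.continuousOn 0 ⟨by linarith, le_rfl⟩).congr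
          · intro y hy; simp only [hxF, if_pos hy.2]
          · simp only [hxF, if_pos le_rfl]
      have huni := hL.union hR
      apply huni.mono
      intro y hy
      rcases le_or_gt y 0 with h' | h'
      · exact Or.inl ⟨hy, h'⟩
      · exact Or.inr h'.le
  have hic : ∀ t ∈ Icc (-τ) (0:ℝ), xF t = β t := fun t htt => by
    simp only [hxF, if_pos htt.2]
  have hsol : IsDelaySolution a b τ β xF := ⟨hcont, hic, hderiv⟩
  refine ⟨hsol, fun t ht => hxF_eq t ht, fun y hy t ht => ?_⟩
  rw [DelayAux.uniq hτ hy hsol t ht]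
  exact hxF_eq t ht

end
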